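/- Let x ∈ ℝ and z ∈ ℂ with Δ := x(1−x) − |z|² > 0, set C := 2√Δ and ρ := [[x, z],[conj z, 1−x]]. For k ∈ {1,2}, let (ẋ_k, ż_k) ∈ ℝ × ℂ be tangent data and let L_k be the closed-form SLD matrix built from (x, z, ẋ_k, ż_k): with α := |z|², β_k := 2·Re(ż_k·conj z), x_{L,k} := (β_k(x−1) − ẋ_k(2α + x − 1))/Δ, y_{L,k} := ((2α − x)ẋ_k − β_k x)/Δ, S_k := x_{L,k} + y_{L,k}, a_k := 2·Re(ż_k) − (Re z)·S_k, b_k := 2·Im(ż_k) − (Im z)·S_k, and L_k := [[x_{L,k}, a_k + i b_k],[a_k − i b_k, y_{L,k}]]. Define Ċ_k := ((1−2x)ẋ_k − 2·Re(conj(z)·ż_k))/√Δ. Then the SLD quantum Fisher pairing satisfies the three-channel identity (1/2)·Tr(ρ(L₁L₂ + L₂L₁)) = 4·ẋ₁ẋ₂ + 4·Re(ż₁·conj(ż₂)) + Ċ₁·Ċ₂. -/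

import Mathlib

open Complex

/-- The closed-form SLD matrix associated with the reduced state data `(x, z)`
and tangent data `(xd, zd)`. -/
noncomputable def sldMat (x : ℝ) (z : ℂ) (xd : ℝ) (zd : ℂ) : Matrix (Fin 2) (Fin 2) ℂ :=
  let Δ : ℝ := x * (1 - x) - ‖z‖ ^ 2
  let α : ℝ := ‖z‖ ^ 2
  let β : ℝ := 2 * (zd * (starRingEnd ℂ) z).re
  let xL : ℝ := (β * (x - 1) - xd * (2 * α + x - 1)) / Δ
  let yL : ℝ := ((2 * α - x) * xd - β * x) / Δ
  let S : ℝ := xL + yL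
  let a : ℝ := 2 * zd.re - z.re * S
  let b : ℝ := 2 * zd.im - z.im * S
  !![(xL : ℂ), (a : ℂ) + (b : ℂ) * Complex.I;
     (a : ℂ) - (b : ℂ) * Complex.I, (yL : ℂ)]

/-- The induced derivative of the concurrence `C = 2√Δ` along tangent data `(xd, zd)`. -/
noncomputable def concurDeriv (x : ℝ) (z : ℂ) (xd : ℝ) (zd : ℂ) : ℝ :=
  ((1 - 2 * x) * xd - 2 * ((starRingEnd ℂ) z * zd).re)
    / Real.sqrt (x * (1 - x) - ‖z‖ ^ 2)

set_option maxHeartbeats 1000000 in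
lemma tr_aux (p u v x1 a1 b1 y1 x2 a2 b2 y2 : ℝ) :
    Matrix.trace (!![(p:ℂ), (u:ℂ) + v * I; (u:ℂ) - v * I, 1 - (p:ℂ)] *
      (!![(x1:ℂ), (a1:ℂ) + b1 * I; (a1:ℂ) - b1 * I, (y1:ℂ)] *
         !![(x2:ℂ), (a2:ℂ) + b2 * I; (a2:ℂ) - b2 * I, (y2:ℂ)] +
       !![(x2:ℂ), (a2:ℂ) + b2 * I; (a2:ℂ) - b2 * I, (y2:ℂ)] *
         !![(x1:ℂ), (a1:ℂ) + b1 * I; (a1:ℂ) - b1 * I, (y1:ℂ)]))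
    = ((2 * p * (x1 * x2 + a1 * a2 + b1 * b2)
        + 2 * (1 - p) * (y1 * y2 + a1 * a2 + b1 * b2)
        + 2 * u * (a2 * (x1 + y1) + a1 * (x2 + y2))
        + 2 * v * (b2 * (x1 + y1) + b1 * (x2 + y2)) : ℝ) : ℂ) := by
  simp only [Matrix.trace_fin_two, Matrix.mul_apply, Fin.sum_univ_two, Matrix.add_apply,
    Matrix.cons_val', Matrix.cons_val_zero, Matrix.cons_val_one, Matrix.head_cons,
    Matrix.empty_val', Matrix.cons_val_fin_one, Matrix.head_fin_const]
  push_cast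
  rw [Complex.ext_iff]
  constructor <;>
  · simp [Complex.mul_re, Complex.mul_im]
    ring

set_option maxHeartbeats 2000000 in
/-- Three-channel identity for the SLD quantum Fisher pairing:
`(1/2) Tr(ρ(L₁L₂ + L₂L₁)) = 4 ẋ₁ẋ₂ + 4 Re(ż₁ conj ż₂) + Ċ₁ Ċ₂`. -/
theorem sld_three_channel (x : ℝ) (z : ℂ) (xd₁ xd₂ : ℝ) (zd₁ zd₂ : ℂ)
    (hΔ : x * (1 - x) - ‖z‖ ^ 2 > 0) :
    let ρ : Matrix (Fin 2) (Fin 2) ℂ := !![(x : ℂ), z; (starRingEnd ℂ) z, 1 - (x : ℂ)]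
    let L₁ := sldMat x z xd₁ zd₁
    let L₂ := sldMat x z xd₂ zd₂
    (1 / 2 : ℂ) * Matrix.trace (ρ * (L₁ * L₂ + L₂ * L₁))
      = ((4 * xd₁ * xd₂ + 4 * (zd₁ * (starRingEnd ℂ) zd₂).re
          + concurDeriv x z xd₁ zd₁ * concurDeriv x z xd₂ zd₂ : ℝ) : ℂ) := by
  intro ρ L₁ L₂
  have hsne : Real.sqrt (x * (1 - x) - ‖z‖ ^ 2) ≠ 0 :=
    ne_of_gt (Real.sqrt_pos.mpr hΔ)
  set s := Real.sqrt (x * (1 - x) - ‖z‖ ^ 2) with hsdef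
  have hs2 : s ^ 2 = x * (1 - x) - ‖z‖ ^ 2 := Real.sq_sqrt hΔ.le
  have habs : ‖z‖ ^ 2 = z.re ^ 2 + z.im ^ 2 := by
    rw [Complex.sq_norm, Complex.normSq_apply]; ring
  have hz : z = (z.re : ℂ) + z.im * I := (Complex.re_add_im z).symm
  have hzc : (starRingEnd ℂ) z = (z.re : ℂ) - z.im * I := by
    rw [hz]; simp [Complex.ext_iff]
  have hcd : concurDeriv x z xd₁ zd₁ * concurDeriv x z xd₂ zd₂
      = (((1 - 2 * x) * xd₁ - 2 * ((starRingEnd ℂ) z * zd₁).re)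
          * ((1 - 2 * x) * xd₂ - 2 * ((starRingEnd ℂ) z * zd₂).re))
        / (x * (1 - x) - ‖z‖ ^ 2) := by
    rw [concurDeriv, concurDeriv, div_mul_div_comm, Real.mul_self_sqrt hΔ.le]
  simp only [ρ, L₁, L₂, sldMat]
  rw [hcd, hzc]
  nth_rewrite 1 [hz]
  rw [tr_aux]
  rw [show (1/2 : ℂ) = ((1/2 : ℝ) : ℂ) by norm_num, ← Complex.ofReal_mul,
    Complex.ofReal_inj]
  have hΔ' : x * (1 - x) - (z.re ^ 2 + z.im ^ 2) ≠ 0 := by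
    rw [← habs]; exact ne_of_gt hΔ
  simp only [Complex.mul_re, Complex.mul_im, Complex.sub_re, Complex.sub_im,
    Complex.ofReal_re, Complex.ofReal_im, Complex.I_re, Complex.I_im, Complex.conj_re,
    Complex.conj_im, habs]
  field_simp
  ring
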